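/- On X = ℝ≥0 with the partial metric p(x,y) = max{x,y}, the constant map w₀ on the hyperspace of nonempty compact sets sending every B to C = [3,4] is not a contraction with respect to the Hausdorff partial metric h_p: there exist B₁ = [0,1] and B₂ = [2,3] with h_p(w₀(B₁), w₀(B₂)) = 4 > 3 = h_p(B₁,B₂). -/
import Mathlib


open Filter Topology Set ENNReal

/-- A partial metric on `X` (Matthews' axioms P1–P4). -/
structure PartialMetricOn (X : Type*) where
  p : X → X → ℝ
  nonneg_self : ∀ x, 0 ≤ p x x
  self_le : ∀ x y, p x x ≤ p x y
  eq_of_indist : ∀ x y, p x x = p x y → p x y = p y y → x = y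
  symm : ∀ x y, p x y = p y x
  triangle : ∀ x y z, p x z ≤ p x y + p y z - p y y

variable {X : Type*}

/-- A sequence is Cauchy if `p (a m) (a n)` converges as `m, n → ∞`. -/
def PartialMetricOn.IsCauchySeq (P : PartialMetricOn X) (a : ℕ → X) : Prop :=
  ∃ l : ℝ, Tendsto (fun mn : ℕ × ℕ => P.p (a mn.1) (a mn.2)) atTop (nhds l)

/-- Convergence in a partial metric space: `lim p (a n) x = p x x`. -/
def PartialMetricOn.ConvergesTo (P : PartialMetricOn X) (a : ℕ → X) (x : X) : Prop :=
  Tendsto (fun n => P.p (a n) x) atTop (nhds (P.p x x))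

/-- Completeness: every Cauchy sequence converges, with `lim p (a m) (a n) = p x x`. -/
def PartialMetricOn.Complete (P : PartialMetricOn X) : Prop :=
  ∀ a : ℕ → X, P.IsCauchySeq a → ∃ x, P.ConvergesTo a x ∧
    Tendsto (fun mn : ℕ × ℕ => P.p (a mn.1) (a mn.2)) atTop (nhds (P.p x x))

/-- The topology induced by a partial metric, generated by the open balls
`{y | p x y < p x x + ε}`. -/
def PartialMetricOn.topology (P : PartialMetricOn X) : TopologicalSpace X :=
  TopologicalSpace.generateFrom {s | ∃ x ε, 0 < ε ∧ s = {y | P.p x y < P.p x x + ε}}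

/-- The Lipschitz constant `Lip_p f = sup_{x ≠ y} p (f x) (f y) / p x y ∈ [0,∞]`. -/
noncomputable def PartialMetricOn.lip (P : PartialMetricOn X) (f : X → X) : ℝ≥0∞ :=
  ⨆ q : {q : X × X // q.1 ≠ q.2}, ENNReal.ofReal (P.p (f q.1.1) (f q.1.2) / P.p q.1.1 q.1.2)

/-- The diameter `diam A = sup_{x,y ∈ A} p x y ∈ [0,∞]`. -/
noncomputable def PartialMetricOn.diam (P : PartialMetricOn X) (A : Set X) : ℝ≥0∞ :=
  ⨆ x ∈ A, ⨆ y ∈ A, ENNReal.ofReal (P.p x y)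

/-- `ρ_p(A,B) = sup_{x ∈ A} inf_{y ∈ B} p x y`. -/
noncomputable def PartialMetricOn.rho (P : PartialMetricOn X) (A B : Set X) : ℝ :=
  sSup ((fun x => sInf ((fun y => P.p x y) '' B)) '' A)

/-- The Hausdorff partial metric `h_p(A,B) = max {ρ_p(A,B), ρ_p(B,A)}`. -/
noncomputable def PartialMetricOn.hp (P : PartialMetricOn X) (A B : Set X) : ℝ :=
  max (P.rho A B) (P.rho B A)

/-- `wordComp f w m = f_{w 0} ∘⋯-style composition: the map `f_{[w]_m}`. -/
def wordComp {ι : Type*} (f : ι → X → X) (w : ℕ → ι) : ℕ → X → X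
  | 0 => id
  | (m+1) => (wordComp f w m) ∘ (f (w m))


/-- On `ℝ≥0` with `p x y = max x y`, the constant map `B ↦ [3,4]` on the hyperspace is not a
contraction for the Hausdorff partial metric. -/

noncomputable def Pmax : PartialMetricOn NNReal where
  p x y := max (x : ℝ) (y : ℝ)
  nonneg_self x := by positivity
  self_le x y := by simp
  eq_of_indist x y h1 h2 := by
    simp only [max_self] at h1 h2
    have : (x : ℝ) = y := by
      rcases max_cases (x:ℝ) (y:ℝ) with ⟨he, hl⟩ | ⟨he, hl⟩
      · rw [he] at h2; linarith
      · rw [he] at h1; linarith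
    exact_mod_cast this
  symm x y := max_comm _ _
  triangle x y z := by
    simp only [max_self]
    rcases le_total (x:ℝ) z with h | h
    · have h1 : (z:ℝ) ≤ max (y:ℝ) z := le_max_right _ _
      have h2 : (y:ℝ) ≤ max (x:ℝ) y := le_max_right _ _
      rcases max_cases (x:ℝ) z with ⟨he, _⟩ | ⟨he, _⟩ <;> rw [he] <;> linarith
    · have h1 : (x:ℝ) ≤ max (x:ℝ) y := le_max_left _ _
      have h2 : (y:ℝ) ≤ max (y:ℝ) z := le_max_left _ _
      rcases max_cases (x:ℝ) z with ⟨he, _⟩ | ⟨he, _⟩ <;> rw [he] <;> linarith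

lemma inf_img (x a b : NNReal) (hab : a ≤ b) :
    sInf ((fun y : NNReal => max (x:ℝ) (y:ℝ)) '' Set.Icc a b) = max (x:ℝ) (a:ℝ) := by
  have hlb : ∀ z ∈ (fun y : NNReal => max (x:ℝ) (y:ℝ)) '' Set.Icc a b,
      max (x:ℝ) (a:ℝ) ≤ z := by
    rintro _ ⟨y, hy, rfl⟩
    exact max_le_max le_rfl (by exact_mod_cast hy.1)
  have hmem : max (x:ℝ) (a:ℝ) ∈ (fun y : NNReal => max (x:ℝ) (y:ℝ)) '' Set.Icc a b :=
    ⟨a, ⟨le_rfl, hab⟩, rfl⟩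
  exact le_antisymm (csInf_le ⟨_, hlb⟩ hmem) (le_csInf ⟨_, hmem⟩ hlb)

lemma sup_img (a c d : NNReal) (hcd : c ≤ d) :
    sSup ((fun x : NNReal => max (x:ℝ) (a:ℝ)) '' Set.Icc c d) = max (d:ℝ) (a:ℝ) := by
  have hub : ∀ z ∈ (fun x : NNReal => max (x:ℝ) (a:ℝ)) '' Set.Icc c d,
      z ≤ max (d:ℝ) (a:ℝ) := by
    rintro _ ⟨y, hy, rfl⟩
    exact max_le_max (by exact_mod_cast hy.2) le_rfl
  have hmem : max (d:ℝ) (a:ℝ) ∈ (fun x : NNReal => max (x:ℝ) (a:ℝ)) '' Set.Icc c d :=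
    ⟨d, ⟨hcd, le_rfl⟩, rfl⟩
  exact le_antisymm (csSup_le ⟨_, hmem⟩ hub) (le_csSup ⟨_, hub⟩ hmem)

lemma rho_eq (a b c d : NNReal) (hab : a ≤ b) (hcd : c ≤ d) :
    Pmax.rho (Set.Icc c d) (Set.Icc a b) = max (d:ℝ) (a:ℝ) := by
  unfold PartialMetricOn.rho
  have : ∀ x ∈ Set.Icc c d,
      sInf ((fun y => Pmax.p x y) '' Set.Icc a b) = (fun x : NNReal => max (x:ℝ) (a:ℝ)) x := by
    intro x _
    exact inf_img x a b hab
  rw [Set.image_congr this, sup_img a c d hcd]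

theorem stmt9 :
    ∃ P : PartialMetricOn NNReal, (∀ x y : NNReal, P.p x y = ((max x y : NNReal) : ℝ)) ∧
      P.hp (Set.Icc 3 4) (Set.Icc 3 4) = 4 ∧
      P.hp (Set.Icc 0 1) (Set.Icc 2 3) = 3 ∧
      ∀ s : ℝ, s < 1 →
        ¬ P.hp (Set.Icc 3 4) (Set.Icc 3 4) ≤ s * P.hp (Set.Icc 0 1) (Set.Icc 2 3) := by
  refine ⟨Pmax, fun x y => by simp [Pmax, NNReal.coe_max], ?_, ?_, ?_⟩
  · unfold PartialMetricOn.hp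
    rw [rho_eq 3 4 3 4 (by norm_num) (by norm_num)]
    norm_num
  · unfold PartialMetricOn.hp
    rw [rho_eq 2 3 0 1 (by norm_num) (by norm_num),
        rho_eq 0 1 2 3 (by norm_num) (by norm_num)]
    norm_num
  · intro s hs h
    unfold PartialMetricOn.hp at h
    rw [rho_eq 3 4 3 4 (by norm_num) (by norm_num),
        rho_eq 2 3 0 1 (by norm_num) (by norm_num),
        rho_eq 0 1 2 3 (by norm_num) (by norm_num)] at h
    norm_num at h
    linarith
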